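/- Let M be a paving matroid with r(M) ≥ 3 and |E(M)| ≥ 2·r(M) + 2, and suppose that for every nonempty X ⊆ E(M), |X|/r(X) ≤ |E(M)|/r(M). Then there exists a basis B of M such that r(M\B) = r(M) and for every nonempty X ⊆ E(M) - B, |X|/r(X) ≤ |E(M) - B|/r(M). -/

import Mathlib

open Set

variable {α : Type*}

/-- The rank of a set `X` in a matroid: size of a largest independent subset of `X`. -/
noncomputable def Matroid.rkSet (M : Matroid α) (X : Set α) : ℕ :=
  sSup {n | ∃ I, M.Indep I ∧ I ⊆ X ∧ I.ncard = n}

/-- The rank of a matroid. -/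
noncomputable def Matroid.rank (M : Matroid α) : ℕ := M.rkSet M.E

/-- A circuit is a minimal dependent set. -/
def Matroid.IsCircuit' (M : Matroid α) (C : Set α) : Prop :=
  M.Dep C ∧ ∀ D, D ⊂ C → M.Indep D

/-- A paving matroid: every circuit has size at least the rank. -/
def Matroid.Paving (M : Matroid α) : Prop :=
  ∀ C, M.IsCircuit' C → M.rank ≤ C.ncard

/-- Deletion of a set from a matroid. -/
noncomputable def Matroid.del (M : Matroid α) (D : Set α) : Matroid α :=
  M.restrict (M.E \ D)

/-- A cyclic ordering of a matroid, given as a list: every `M.rank`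
cyclically-consecutive entries form a base. -/
def Matroid.IsCyclicOrdering (M : Matroid α) (l : List α) : Prop :=
  l.Nodup ∧ {x | x ∈ l} = M.E ∧
    ∀ i : ℕ, M.IsBase {x | x ∈ (l.rotate i).take M.rank}

section Aux

variable {M : Matroid α}

private lemma finss [M.Finite] {X : Set α} (hX : X ⊆ M.E) : X.Finite :=
  M.ground_finite.subset hX

private lemma rkSet_eq_of_basis [M.Finite] {I X : Set α} (hI : M.IsBasis I X) :
    M.rkSet X = I.ncard := by
  apply IsGreatest.csSup_eq
  constructor
  · exact ⟨I, hI.indep, hI.subset, rfl⟩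
  · rintro m ⟨J, hJ, hJX, rfl⟩
    obtain ⟨J', hJ', hJJ'⟩ := hJ.subset_isBasis_of_subset hJX hI.subset_ground
    have h1 : J'.ncard = I.ncard := by
      rw [Set.ncard_def, Set.ncard_def, hJ'.encard_eq_encard hI]
    exact h1 ▸ Set.ncard_le_ncard hJJ' (finss hJ'.indep.subset_ground)

private lemma le_rkSet [M.Finite] {J X : Set α} (hJ : M.Indep J) (hJX : J ⊆ X)
    (hX : X ⊆ M.E) : J.ncard ≤ M.rkSet X := by
  obtain ⟨I, hI⟩ := M.exists_isBasis X hX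
  rw [rkSet_eq_of_basis hI]
  obtain ⟨J', hJ', hJJ'⟩ := hJ.subset_isBasis_of_subset hJX hX
  have h1 : J'.ncard = I.ncard := by
    rw [Set.ncard_def, Set.ncard_def, hJ'.encard_eq_encard hI]
  exact h1 ▸ Set.ncard_le_ncard hJJ' (finss hJ'.indep.subset_ground)

private lemma rkSet_le_ncard [M.Finite] {X : Set α} (hX : X ⊆ M.E) :
    M.rkSet X ≤ X.ncard := by
  obtain ⟨I, hI⟩ := M.exists_isBasis X hX
  rw [rkSet_eq_of_basis hI]
  exact Set.ncard_le_ncard hI.subset (finss hX)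

private lemma rkSet_le_rank [M.Finite] {X : Set α} (hX : X ⊆ M.E) :
    M.rkSet X ≤ M.rank := by
  obtain ⟨I, hI⟩ := M.exists_isBasis X hX
  rw [rkSet_eq_of_basis hI]
  exact le_rkSet hI.indep hI.indep.subset_ground Subset.rfl

private lemma base_ncard [M.Finite] {B : Set α} (hB : M.IsBase B) : B.ncard = M.rank :=
  (rkSet_eq_of_basis (Matroid.isBasis_ground_iff.mpr hB)).symm

private lemma indep_rkSet [M.Finite] {X : Set α} (hX : M.Indep X) :
    M.rkSet X = X.ncard :=
  rkSet_eq_of_basis hX.isBasis_self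

private lemma rkSet_closure [M.Finite] {X : Set α} (hX : X ⊆ M.E) :
    M.rkSet (M.closure X) = M.rkSet X := by
  obtain ⟨I, hI⟩ := M.exists_isBasis X hX
  rw [rkSet_eq_of_basis hI, rkSet_eq_of_basis hI.isBasis_closure_right]

private lemma paving_indep_aux [M.Finite] (hpav : M.Paving) :
    ∀ (k : ℕ) (X : Set α), X.ncard ≤ k → X ⊆ M.E → X.ncard < M.rank → M.Indep X := by
  intro k
  induction k with
  | zero =>
    intro X h0 hXE _
    have hX0 : X.ncard = 0 := by omega
    have : X = ∅ := ((Set.ncard_eq_zero (finss hXE)).mp hX0)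
    rw [this]; exact M.empty_indep
  | succ k IH =>
    intro X hk hXE hlt
    by_contra hnind
    by_cases hc : ∀ D, D ⊂ X → M.Indep D
    · have := hpav X ⟨⟨hnind, hXE⟩, hc⟩
      omega
    · push_neg at hc
      obtain ⟨D, hDX, hD⟩ := hc
      have hDcard : D.ncard < X.ncard := Set.ncard_lt_ncard hDX (finss hXE)
      exact hD (IH D (by omega) (hDX.subset.trans hXE) (by omega))

private lemma indep_of_small [M.Finite] (hpav : M.Paving) {X : Set α}
    (hXE : X ⊆ M.E) (h : X.ncard < M.rank) : M.Indep X :=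
  paving_indep_aux hpav X.ncard X le_rfl hXE h

private lemma rkSet_ge_sub_one [M.Finite] (hpav : M.Paving) {X : Set α}
    (hXE : X ⊆ M.E) (hr : 1 ≤ M.rank) (h : M.rank - 1 ≤ X.ncard) :
    M.rank - 1 ≤ M.rkSet X := by
  obtain ⟨S, hSX, hScard⟩ := Set.exists_subset_card_eq h
  have hind : M.Indep S := indep_of_small hpav (hSX.trans hXE) (by omega)
  have := le_rkSet hind hSX hXE
  omega

/-- rank-(r-1) flats ("hyperplanes"). -/
def Hyp (M : Matroid α) (F : Set α) : Prop :=
  F ⊆ M.E ∧ M.rkSet F = M.rank - 1 ∧ M.closure F = F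

private lemma hyp_closure [M.Finite] {X : Set α} (hXE : X ⊆ M.E)
    (hX : M.rkSet X = M.rank - 1) :
    Hyp M (M.closure X) ∧ X ⊆ M.closure X :=
  ⟨⟨M.closure_subset_ground X, by rw [rkSet_closure hXE, hX], M.closure_closure X⟩,
   M.subset_closure X hXE⟩

private lemma hyp_inter_small [M.Finite] (hpav : M.Paving) (h1 : 1 ≤ M.rank)
    {F F' : Set α} (hF : Hyp M F) (hF' : Hyp M F')
    (hbig : M.rank - 1 ≤ (F ∩ F').ncard) : F = F' := by
  obtain ⟨S, hSsub, hScard⟩ := Set.exists_subset_card_eq hbig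
  have hSE : S ⊆ M.E := (hSsub.trans inter_subset_left).trans hF.1
  have hSind : M.Indep S := indep_of_small hpav hSE (by omega)
  have key : ∀ (G : Set α), Hyp M G → S ⊆ G → M.closure S = G := by
    intro G hG hSG
    have hbasis : M.IsBasis S G := by
      rw [Matroid.isBasis_iff hG.1]
      refine ⟨hSind, hSG, fun J hJ hSJ hJG => ?_⟩
      have hJle : J.ncard ≤ M.rkSet G := le_rkSet hJ hJG hG.1
      have hJS : J.ncard ≤ S.ncard := by
        have := hG.2.1
        omega
      exact Set.eq_of_subset_of_ncard_le hSJ hJS (finss hJ.subset_ground)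
    exact hbasis.closure_eq_closure.trans hG.2.2
  rw [← key F hF (hSsub.trans inter_subset_left),
    key F' hF' (hSsub.trans inter_subset_right)]

/- Arithmetic auxiliary lemmas -/

private lemma arith_n_le {r n : ℕ} (hr : 3 ≤ r) (hn : 2*r+2 ≤ n) :
    n ≤ 2*((r-1)*(n-r)/r) + 2 := by
  obtain ⟨a, rfl⟩ : ∃ a, r = a + 3 := ⟨r - 3, by omega⟩
  obtain ⟨c, rfl⟩ : ∃ c, n = 2*(a+3) + 2 + c := ⟨n - (2*(a+3)+2), by omega⟩
  have e1 : a + 3 - 1 = a + 2 := by omega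
  have e2 : 2*(a+3) + 2 + c - (a+3) = a + 5 + c := by omega
  rw [e1, e2]
  have hdm := Nat.div_add_mod ((a+2)*(a+5+c)) (a+3)
  have hm : ((a+2)*(a+5+c)) % (a+3) < a + 3 := Nat.mod_lt _ (by omega)
  by_contra hcon
  push_neg at hcon
  have hcon2 : (a+3)*(2*((a+2)*(a+5+c)/(a+3))) ≤ (a+3)*(2*a+5+c) :=
    Nat.mul_le_mul_left _ (by omega)
  nlinarith [hdm, hm, hcon2]

private lemma arith_F_le {r n f : ℕ} (hr : 3 ≤ r) (hn : 2*r+2 ≤ n)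
    (h : f * r ≤ n * (r-1)) : f ≤ (r-1)*(n-r)/r + (r-1) := by
  have h0 : 0 < r := by omega
  have h1 : f ≤ n * (r-1) / r := (Nat.le_div_iff_mul_le h0).mpr h
  have h2 : n * (r-1) = (r-1)*(n-r) + (r-1) * r := by
    obtain ⟨a, rfl⟩ : ∃ a, r = a + 3 := ⟨r - 3, by omega⟩
    obtain ⟨c, rfl⟩ : ∃ c, n = 2*(a+3) + 2 + c := ⟨n - (2*(a+3)+2), by omega⟩
    have e1 : a + 3 - 1 = a + 2 := by omega
    have e2 : 2*(a+3) + 2 + c - (a+3) = a + 5 + c := by omega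
    rw [e1, e2]
    ring
  rw [h2, Nat.add_mul_div_right _ _ h0] at h1
  exact h1

private lemma arith_Q_lt {r n : ℕ} (hr : 3 ≤ r) (hn : 2*r+2 ≤ n) :
    (r-1)*(n-r)/r + 1 ≤ n - r := by
  have h0 : 0 < r := by omega
  have h1 : (r-1)*(n-r) < (n-r)*r := by
    obtain ⟨a, rfl⟩ : ∃ a, r = a + 3 := ⟨r - 3, by omega⟩
    obtain ⟨c, rfl⟩ : ∃ c, n = 2*(a+3) + 2 + c := ⟨n - (2*(a+3)+2), by omega⟩
    have e1 : a + 3 - 1 = a + 2 := by omega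
    have e2 : 2*(a+3) + 2 + c - (a+3) = a + 5 + c := by omega
    rw [e1, e2]
    nlinarith
  have := (Nat.div_lt_iff_lt_mul h0).mpr h1
  omega

end Aux

/-- Proposition 1: a paving matroid with `|E| ≥ 2r + 2`, `r ≥ 3` and `γ(M) = β(E(M))`
has a basis `B` with `r(M\B) = r(M)` and `γ(M\B) = β(E(M) - B)`. -/
theorem stmt3 (M : Matroid α) [M.Finite] (hpav : M.Paving) (hr : 3 ≤ M.rank)
    (hE : 2 * M.rank + 2 ≤ M.E.ncard)
    (hγ : ∀ X ⊆ M.E, X.Nonempty → X.ncard * M.rank ≤ M.E.ncard * M.rkSet X) :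
    ∃ B, M.IsBase B ∧ (M.del B).rank = M.rank ∧
      ∀ X ⊆ M.E \ B, X.Nonempty →
        X.ncard * M.rank ≤ (M.E \ B).ncard * M.rkSet X := by
  classical
  have hfinE : M.E.Finite := M.ground_finite
  -- abbreviations (not `set`, to keep omega happy)
  have hnQ : M.E.ncard ≤ 2*((M.rank-1)*(M.E.ncard-M.rank)/M.rank) + 2 := arith_n_le hr hE
  have hQr : ((M.rank-1)*(M.E.ncard-M.rank)/M.rank) * M.rank ≤ (M.rank-1)*(M.E.ncard-M.rank) :=
    Nat.div_mul_le_self _ _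
  have hQlt : ((M.rank-1)*(M.E.ncard-M.rank)/M.rank) + 1 ≤ M.E.ncard - M.rank :=
    arith_Q_lt hr hE
  -- size bound for hyperplanes
  have hypcard : ∀ F, Hyp M F →
      F.ncard ≤ ((M.rank-1)*(M.E.ncard-M.rank)/M.rank) + (M.rank-1) := by
    intro F hF
    have hFne : F.Nonempty := by
      rcases F.eq_empty_or_nonempty with h | h
      · exfalso
        have h1 := hF.2.1
        rw [h] at h1
        have h2 : M.rkSet (∅ : Set α) ≤ (∅ : Set α).ncard := rkSet_le_ncard (empty_subset _)
        simp at h2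
        omega
      · exact h
    have h1 := hγ F hF.1 hFne
    rw [hF.2.1] at h1
    exact arith_F_le hr hE h1
  -- the counting lemma : at most one violated hyperplane, and then others are ≤ Q - 1
  have count : ∀ B F F', M.IsBase B → Hyp M F → Hyp M F' → F ≠ F' →
      ((M.rank-1)*(M.E.ncard-M.rank)/M.rank) + 1 ≤ (F \ B).ncard →
      (F' \ B).ncard + 1 ≤ ((M.rank-1)*(M.E.ncard-M.rank)/M.rank) := by
    intro B F F' hB hF hF' hne hviol
    by_contra hcon
    push_neg at hcon
    have hFB : F \ B ⊆ M.E \ B := diff_subset_diff_left hF.1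
    have hF'B : F' \ B ⊆ M.E \ B := diff_subset_diff_left hF'.1
    have hU : ((F\B) ∪ (F'\B)).ncard ≤ (M.E \ B).ncard :=
      Set.ncard_le_ncard (union_subset hFB hF'B) (hfinE.diff)
    have hIsub : (F\B) ∩ (F'\B) ⊆ F ∩ F' :=
      inter_subset_inter diff_subset diff_subset
    have hI : ((F\B) ∩ (F'\B)).ncard ≤ (F ∩ F').ncard :=
      Set.ncard_le_ncard hIsub (finss (inter_subset_left.trans hF.1))
    have hsmall : (F ∩ F').ncard < M.rank - 1 := by
      by_contra h
      push_neg at h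
      exact hne (hyp_inter_small hpav (by omega) hF hF' h)
    have hEB : (M.E \ B).ncard = M.E.ncard - M.rank := by
      rw [Set.ncard_diff hB.subset_ground (finss hB.subset_ground), base_ncard hB]
    have hie := Set.ncard_inter_add_ncard_union (F\B) (F'\B)
      (finss (diff_subset.trans hF.1)) (finss (diff_subset.trans hF'.1))
    omega
  -- the exchange step
  have swap : ∀ B F, M.IsBase B → Hyp M F →
      ((M.rank-1)*(M.E.ncard-M.rank)/M.rank) + 1 ≤ (F \ B).ncard →
      ∃ B', M.IsBase B' ∧ (F \ B').ncard + 1 = (F \ B).ncard ∧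
        ∀ G, G ⊆ M.E → (G \ B').ncard ≤ (G \ B).ncard + 1 := by
    intro B F hB hF hviol
    have hBE := hB.subset_ground
    have hBfin : B.Finite := finss hBE
    have hFfin : F.Finite := finss hF.1
    have hFBfin : (F \ B).Finite := hFfin.diff
    have hne : (F \ B).Nonempty := by
      rw [← Set.ncard_pos hFBfin]
      omega
    obtain ⟨x, hxF, hxB⟩ := hne
    have hcard1 : (F \ B).ncard + (F ∩ B).ncard = F.ncard := by
      rw [show F \ B = F \ (F ∩ B) from diff_self_inter.symm]
      exact Set.ncard_diff_add_ncard_of_subset inter_subset_left hFfin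
    have hFB2 : (F ∩ B).ncard ≤ M.rank - 2 := by
      have hFle := hypcard F hF
      omega
    have hJE : insert x (F ∩ B) ⊆ M.E :=
      insert_subset (hF.1 hxF) (inter_subset_left.trans hF.1)
    have hJcard : (insert x (F ∩ B)).ncard < M.rank := by
      have := Set.ncard_insert_le x (F ∩ B)
      omega
    have hJind : M.Indep (insert x (F ∩ B)) := indep_of_small hpav hJE hJcard
    obtain ⟨B', hB', hJB', hB'sub⟩ := hJind.exists_isBase_subset_union_isBase hB
    have hB'E := hB'.subset_ground
    have hB'fin : B'.Finite := finss hB'E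
    have hxB' : x ∈ B' := hJB' (mem_insert _ _)
    have hunion : insert x (F ∩ B) ∪ B = insert x B := by
      ext y; simp; tauto
    rw [hunion] at hB'sub
    have hdiff1 : B' \ B = {x} := by
      apply Subset.antisymm
      · rintro y ⟨hy1, hy2⟩
        rcases hB'sub hy1 with h | h
        · exact h
        · exact absurd h hy2
      · exact singleton_subset_iff.mpr ⟨hxB', hxB⟩
    have hBr : B.ncard = M.rank := base_ncard hB
    have hB'r : B'.ncard = M.rank := base_ncard hB'
    have e1 : (B' \ B).ncard + (B' ∩ B).ncard = B'.ncard := by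
      rw [show B' \ B = B' \ (B' ∩ B) from diff_self_inter.symm]
      exact Set.ncard_diff_add_ncard_of_subset inter_subset_left hB'fin
    have e2 : (B \ B').ncard + (B ∩ B').ncard = B.ncard := by
      rw [show B \ B' = B \ (B ∩ B') from diff_self_inter.symm]
      exact Set.ncard_diff_add_ncard_of_subset inter_subset_left hBfin
    have hx1 : (B' \ B).ncard = 1 := by rw [hdiff1]; exact Set.ncard_singleton x
    have hcomm : (B' ∩ B).ncard = (B ∩ B').ncard := by rw [inter_comm]
    have hBB' : (B \ B').ncard = 1 := by omega
    obtain ⟨b, hb⟩ := Set.ncard_eq_one.mp hBB'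
    have hbB : b ∈ B := by
      have : b ∈ B \ B' := by rw [hb]; exact rfl
      exact this.1
    have hbB' : b ∉ B' := by
      have : b ∈ B \ B' := by rw [hb]; exact rfl
      exact this.2
    have hbF : b ∉ F := by
      intro hbF
      exact hbB' (hJB' (mem_insert_of_mem _ ⟨hbF, hbB⟩))
    have hFB' : F \ B' = (F \ B) \ {x} := by
      ext y
      simp only [mem_diff, mem_singleton_iff]
      constructor
      · rintro ⟨hyF, hyB'⟩
        refine ⟨⟨hyF, fun hyB => ?_⟩, fun h => hyB' (h ▸ hxB')⟩
        have hymem : y ∈ B \ B' := ⟨hyB, hyB'⟩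
        rw [hb, mem_singleton_iff] at hymem
        exact hbF (hymem ▸ hyF)
      · rintro ⟨⟨hyF, hyB⟩, hyx⟩
        refine ⟨hyF, fun hyB' => ?_⟩
        have hymem : y ∈ B' \ B := ⟨hyB', hyB⟩
        rw [hdiff1, mem_singleton_iff] at hymem
        exact hyx hymem
    have hstep : (F \ B').ncard + 1 = (F \ B).ncard := by
      rw [hFB']
      have hxmem : x ∈ F \ B := ⟨hxF, hxB⟩
      rw [Set.ncard_diff_singleton_of_mem hxmem]
      omega
    refine ⟨B', hB', hstep, ?_⟩
    intro G hGE
    have hsub : G \ B' ⊆ insert b (G \ B) := by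
      rintro y ⟨hyG, hyB'⟩
      by_cases hyB : y ∈ B
      · have : y ∈ B \ B' := ⟨hyB, hyB'⟩
        rw [hb, mem_singleton_iff] at this
        exact Or.inl this
      · exact Or.inr ⟨hyG, hyB⟩
    calc (G \ B').ncard ≤ (insert b (G \ B)).ncard :=
          Set.ncard_le_ncard hsub (((finss hGE).diff).insert b)
    _ ≤ (G \ B).ncard + 1 := Set.ncard_insert_le _ _
  -- repair induction
  have fixup : ∀ (k : ℕ) (B F : Set α), M.IsBase B → Hyp M F →
      (∀ F', Hyp M F' → F' ≠ F →
        (F' \ B).ncard ≤ ((M.rank-1)*(M.E.ncard-M.rank)/M.rank)) →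
      (F \ B).ncard ≤ k →
      ∃ B', M.IsBase B' ∧ ∀ G, Hyp M G →
        (G \ B').ncard ≤ ((M.rank-1)*(M.E.ncard-M.rank)/M.rank) := by
    intro k
    induction k with
    | zero =>
      intro B F hB hF hothers hk
      refine ⟨B, hB, fun G hG => ?_⟩
      by_cases hGF : G = F
      · subst hGF; omega
      · exact hothers G hG hGF
    | succ k IH =>
      intro B F hB hF hothers hk
      by_cases hdone : (F \ B).ncard ≤ ((M.rank-1)*(M.E.ncard-M.rank)/M.rank)
      · refine ⟨B, hB, fun G hG => ?_⟩
        by_cases hGF : G = F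
        · subst hGF; exact hdone
        · exact hothers G hG hGF
      · push_neg at hdone
        obtain ⟨B', hB', hstep, hmono⟩ := swap B F hB hF (by omega)
        apply IH B' F hB' hF
        · intro F' hF' hne
          have h1 := count B F F' hB hF hF' (Ne.symm hne) (by omega)
          have h2 := hmono F' hF'.1
          omega
        · omega
  -- a good base exists
  obtain ⟨B₀, hB₀⟩ := M.exists_isBase
  have hgood : ∃ Bs, M.IsBase Bs ∧ ∀ G, Hyp M G →
      (G \ Bs).ncard ≤ ((M.rank-1)*(M.E.ncard-M.rank)/M.rank) := by
    by_cases hviol : ∃ F, Hyp M F ∧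
        ((M.rank-1)*(M.E.ncard-M.rank)/M.rank) + 1 ≤ (F \ B₀).ncard
    · obtain ⟨F, hF, hFv⟩ := hviol
      refine fixup (F \ B₀).ncard B₀ F hB₀ hF (fun F' hF' hne => ?_) le_rfl
      have := count B₀ F F' hB₀ hF hF' (Ne.symm hne) hFv
      omega
    · push_neg at hviol
      exact ⟨B₀, hB₀, fun G hG => by have := hviol G hG; omega⟩
  obtain ⟨Bs, hBs, hBsgood⟩ := hgood
  have hBsE := hBs.subset_ground
  have hEBs : (M.E \ Bs).ncard = M.E.ncard - M.rank := by
    rw [Set.ncard_diff hBsE (finss hBsE), base_ncard hBs]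
  have hrn : M.rank ≤ M.E.ncard := by omega
  -- rank of the deletion
  have hrkdel : ∀ Y : Set α, Y ⊆ M.E \ Bs → (M.del Bs).rkSet Y = M.rkSet Y := by
    intro Y hY
    unfold Matroid.rkSet
    congr 1
    ext m
    constructor
    · rintro ⟨I, hI, hIY, rfl⟩
      rw [Matroid.del, Matroid.restrict_indep_iff] at hI
      exact ⟨I, hI.1, hIY, rfl⟩
    · rintro ⟨I, hI, hIY, rfl⟩
      refine ⟨I, ?_, hIY, rfl⟩
      rw [Matroid.del, Matroid.restrict_indep_iff]
      exact ⟨hI, hIY.trans hY⟩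
  have hspan : M.rkSet (M.E \ Bs) = M.rank := by
    have hle : M.rkSet (M.E \ Bs) ≤ M.rank := rkSet_le_rank diff_subset
    have hge1 : M.rank - 1 ≤ M.rkSet (M.E \ Bs) :=
      rkSet_ge_sub_one hpav diff_subset (by omega) (by omega)
    by_contra hnel
    have hrk : M.rkSet (M.E \ Bs) = M.rank - 1 := by omega
    obtain ⟨hHyp, hsub⟩ := hyp_closure diff_subset hrk
    have h1 : M.E \ Bs ⊆ M.closure (M.E \ Bs) \ Bs := fun y hy => ⟨hsub hy, hy.2⟩
    have h2 : M.E.ncard - M.rank ≤ (M.closure (M.E \ Bs) \ Bs).ncard := by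
      rw [← hEBs]
      exact Set.ncard_le_ncard h1 ((finss (M.closure_subset_ground _)).diff)
    have h3 := hBsgood _ hHyp
    omega
  refine ⟨Bs, hBs, ?_, ?_⟩
  · have h0 : (M.del Bs).rank = (M.del Bs).rkSet (M.E \ Bs) := rfl
    rw [h0, hrkdel _ Subset.rfl, hspan]
  · intro X hX hXne
    by_cases hind : M.Indep X
    · rw [indep_rkSet hind]
      have h1 : M.rank ≤ (M.E \ Bs).ncard := by omega
      calc X.ncard * M.rank ≤ X.ncard * (M.E \ Bs).ncard :=
            Nat.mul_le_mul_left _ h1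
      _ = (M.E \ Bs).ncard * X.ncard := Nat.mul_comm _ _
    · have hXE : X ⊆ M.E := hX.trans diff_subset
      have hXr : M.rank ≤ X.ncard := by
        by_contra h
        push_neg at h
        exact hind (indep_of_small hpav hXE h)
      have hge : M.rank - 1 ≤ M.rkSet X :=
        rkSet_ge_sub_one hpav hXE (by omega) (by omega)
      have hle : M.rkSet X ≤ M.rank := rkSet_le_rank hXE
      by_cases hfull : M.rkSet X = M.rank
      · rw [hfull]
        exact Nat.mul_le_mul_right _ (Set.ncard_le_ncard hX (hfinE.diff))
      · have hrk : M.rkSet X = M.rank - 1 := by omega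
        obtain ⟨hHyp, hsub⟩ := hyp_closure hXE hrk
        have hXsub : X ⊆ M.closure X \ Bs := fun y hy => ⟨hsub hy, (hX hy).2⟩
        have h1 : X.ncard ≤ ((M.rank-1)*(M.E.ncard-M.rank)/M.rank) :=
          le_trans (Set.ncard_le_ncard hXsub ((finss (M.closure_subset_ground _)).diff))
            (hBsgood _ hHyp)
        rw [hrk, hEBs]
        calc X.ncard * M.rank ≤ ((M.rank-1)*(M.E.ncard-M.rank)/M.rank) * M.rank :=
              Nat.mul_le_mul_right _ h1
        _ ≤ (M.rank-1)*(M.E.ncard-M.rank) := hQr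
        _ = (M.E.ncard-M.rank)*(M.rank-1) := Nat.mul_comm _ _
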